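/- As u → 1⁻, (∫_0^u e^{-1/z}·z/(1−z) dz) / (−log(1−u)) tends to 1/e. Consequently, for fixed y ∈ (0,1), the excitation probability P_{T_u<∞}(y) = S(0,y)/S(0,u) satisfies −log(1−u)·P_{T_u<∞}(y) → e·S(0,y) as u → 1⁻; in particular P_{T_u<∞}(y) → 0 as u → 1⁻. -/

import Mathlib

open Real Filter Set intervalIntegral

/-- Heterodyne scale density Q(z) = e^{-1/z}·z/(1−z). -/
noncomputable def Qhet (z : ℝ) : ℝ := Real.exp (-1 / z) * z / (1 - z)

/-- Heterodyne scale integral S(u,v) = ∫_u^v Q(z) dz. -/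
noncomputable def Shet (u v : ℝ) : ℝ := ∫ z in u..v, Qhet z

noncomputable def Ghet (z : ℝ) : ℝ := expNegInvGlue z * z / (1 - z)

noncomputable def Rhet (z : ℝ) : ℝ := Ghet z - Real.exp (-1) / (1 - z)

lemma Qhet_eq_Ghet {z : ℝ} (hz : 0 ≤ z) : Qhet z = Ghet z := by
  rcases eq_or_lt_of_le hz with h | h
  · simp [Qhet, Ghet, ← h, expNegInvGlue.zero]
  · unfold Qhet Ghet expNegInvGlue
    rw [if_neg (not_le.2 h)]
    congr 2
    rw [neg_div, one_div]

lemma Ghet_contOn : ContinuousOn Ghet (Set.Iio 1) := by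
  apply ContinuousOn.div
  · exact ((expNegInvGlue.contDiff (n := 1)).continuous.mul continuous_id).continuousOn
  · exact (continuous_const.sub continuous_id).continuousOn
  · intro z hz
    have hz' : z < 1 := hz
    show (1:ℝ) - z ≠ 0
    exact (by linarith : (0:ℝ) < 1 - z).ne'

lemma f_le {z : ℝ} (hz : z ∈ Set.Icc (0:ℝ) 1) :
    expNegInvGlue z * z ≤ Real.exp (-1) := by
  obtain ⟨h0, h1⟩ := hz
  rcases eq_or_lt_of_le h0 with h | h
  · rw [← h, expNegInvGlue.zero, zero_mul]
    positivity
  · rw [expNegInvGlue, if_neg (not_le.2 h)]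
    have hlog : Real.log z ≤ z - 1 := Real.log_le_sub_one_of_pos h
    have hzinv : z ≤ z⁻¹ := by
      have hz1 : z * z⁻¹ = 1 := mul_inv_cancel₀ (ne_of_gt h)
      have hip : 0 < z⁻¹ := inv_pos.2 h
      nlinarith
    have hz' : z ≤ Real.exp (z⁻¹ - 1) := by
      calc z = Real.exp (Real.log z) := (Real.exp_log h).symm
        _ ≤ Real.exp (z⁻¹ - 1) := Real.exp_le_exp.2 (by linarith)
    calc Real.exp (-z⁻¹) * z ≤ Real.exp (-z⁻¹) * Real.exp (z⁻¹ - 1) := by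
          exact mul_le_mul_of_nonneg_left hz' (Real.exp_pos _).le
      _ = Real.exp (-1) := by rw [← Real.exp_add]; ring_nf

lemma f_ge {z : ℝ} (hz : z ∈ Set.Icc (0:ℝ) 1) :
    Real.exp (-1) - (1 - z) ≤ expNegInvGlue z * z := by
  obtain ⟨h0, h1⟩ := hz
  have he2 : (2:ℝ) ≤ Real.exp 1 := by
    have := Real.add_one_le_exp (1:ℝ); linarith
  have hinv : Real.exp (-1) ≤ 1/2 := by
    rw [Real.exp_neg]
    rw [inv_le_comm₀ (Real.exp_pos 1) (by norm_num)]
    linarith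
  rcases eq_or_lt_of_le h0 with h | h
  · rw [← h, expNegInvGlue.zero, zero_mul]
    linarith
  · rw [expNegInvGlue, if_neg (not_le.2 h)]
    have key : 2 - z⁻¹ ≤ Real.exp (1 - z⁻¹) := by
      have := Real.add_one_le_exp (1 - z⁻¹); linarith
    have hsplit : Real.exp (-z⁻¹) = Real.exp (-1) * Real.exp (1 - z⁻¹) := by
      rw [← Real.exp_add]; ring_nf
    have h2 : Real.exp (-1) * (2 - z⁻¹) ≤ Real.exp (-z⁻¹) := by
      rw [hsplit]
      exact mul_le_mul_of_nonneg_left key (Real.exp_pos _).le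
    have h3 : Real.exp (-1) * (2 - z⁻¹) * z ≤ Real.exp (-z⁻¹) * z :=
      mul_le_mul_of_nonneg_right h2 h.le
    have hzz : z⁻¹ * z = 1 := inv_mul_cancel₀ (ne_of_gt h)
    have hrw : Real.exp (-1) * (2 - z⁻¹) * z = Real.exp (-1) * (2 * z - 1) := by
      rw [mul_assoc, sub_mul, hzz]
    have h4 : Real.exp (-1) * (2 * z - 1) ≤ Real.exp (-z⁻¹) * z := hrw ▸ h3
    nlinarith [Real.exp_pos (-1)]

lemma Rhet_bound {z : ℝ} (hz : z ∈ Set.Icc (0:ℝ) 1) (hz1 : z < 1) :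
    ‖Rhet z‖ ≤ 1 := by
  have h1z : (0:ℝ) < 1 - z := by linarith
  have hR : Rhet z = (expNegInvGlue z * z - Real.exp (-1)) / (1 - z) := by
    unfold Rhet Ghet
    rw [div_sub_div_same]
  rw [hR, Real.norm_eq_abs, abs_div, abs_of_pos h1z, div_le_one h1z,
    abs_sub_comm, abs_of_nonneg (by linarith [f_le hz])]
  linarith [f_ge hz]

lemma log_int {u : ℝ} (hu0 : 0 ≤ u) (hu1 : u < 1) :
    ∫ z in (0:ℝ)..u, Real.exp (-1) / (1 - z) = Real.exp (-1) * (-Real.log (1 - u)) := by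
  have hsub : Set.uIcc (0:ℝ) u ⊆ Set.Iio 1 := by
    rw [Set.uIcc_of_le hu0]
    intro z hz
    exact lt_of_le_of_lt hz.2 hu1
  have hderiv : ∀ z ∈ Set.uIcc (0:ℝ) u,
      HasDerivAt (fun z => -(Real.exp (-1) * Real.log (1 - z)))
        (Real.exp (-1) / (1 - z)) z := by
    intro z hz
    have h1z : (0:ℝ) < 1 - z := by
      have := hsub hz; simp only [Set.mem_Iio] at this; linarith
    have hlog : HasDerivAt (fun z : ℝ => Real.log (1 - z)) ((1 - z)⁻¹ * (-1)) z := by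
      have h1 : HasDerivAt (fun z : ℝ => 1 - z) (-1) z := by
        simpa using (hasDerivAt_id z).const_sub 1
      exact (Real.hasDerivAt_log (ne_of_gt h1z)).comp z h1
    have : HasDerivAt (fun z => -(Real.exp (-1) * Real.log (1 - z)))
        (-(Real.exp (-1) * ((1 - z)⁻¹ * (-1)))) z := (hlog.const_mul (Real.exp (-1))).neg
    convert this using 1
    ring
  have hcont : ContinuousOn (fun z => Real.exp (-1) / (1 - z)) (Set.uIcc (0:ℝ) u) := by
    apply ContinuousOn.div continuousOn_const
      (continuous_const.sub continuous_id).continuousOn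
    intro z hz
    have hz1 : z < 1 := hsub hz
    show (1:ℝ) - z ≠ 0
    exact (by linarith : (0:ℝ) < 1 - z).ne'
  have := intervalIntegral.integral_eq_sub_of_hasDerivAt hderiv
    (hcont.intervalIntegrable)
  rw [this]
  simp only [sub_zero, Real.log_one, mul_zero, neg_zero, sub_zero]
  ring

lemma Ghet_intble {u : ℝ} (hu0 : 0 ≤ u) (hu1 : u < 1) :
    IntervalIntegrable Ghet MeasureTheory.volume 0 u := by
  apply ContinuousOn.intervalIntegrable
  apply Ghet_contOn.mono
  rw [Set.uIcc_of_le hu0]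
  intro z hz
  exact lt_of_le_of_lt hz.2 hu1

lemma const_intble {u : ℝ} (hu0 : 0 ≤ u) (hu1 : u < 1) :
    IntervalIntegrable (fun z => Real.exp (-1) / (1 - z)) MeasureTheory.volume 0 u := by
  apply ContinuousOn.intervalIntegrable
  apply ContinuousOn.div continuousOn_const
    (continuous_const.sub continuous_id).continuousOn
  intro z hz
  rw [Set.uIcc_of_le hu0] at hz
  have hz1 : z < 1 := lt_of_le_of_lt hz.2 hu1
  show (1:ℝ) - z ≠ 0
  exact (by linarith : (0:ℝ) < 1 - z).ne'

lemma Shet_decomp {u : ℝ} (hu0 : 0 ≤ u) (hu1 : u < 1) :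
    Shet 0 u = Real.exp (-1) * (-Real.log (1 - u)) + ∫ z in (0:ℝ)..u, Rhet z := by
  have h1 : Shet 0 u = ∫ z in (0:ℝ)..u, Ghet z := by
    apply intervalIntegral.integral_congr
    intro z hz
    rw [Set.uIcc_of_le hu0] at hz
    exact Qhet_eq_Ghet hz.1
  have h3 : ∫ z in (0:ℝ)..u, Rhet z =
      (∫ z in (0:ℝ)..u, Ghet z) - ∫ z in (0:ℝ)..u, Real.exp (-1) / (1 - z) := by
    rw [← intervalIntegral.integral_sub (Ghet_intble hu0 hu1) (const_intble hu0 hu1)]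
    rfl
  rw [h1, h3, log_int hu0 hu1]
  ring

lemma Rhet_int_bound {u : ℝ} (hu0 : 0 ≤ u) (hu1 : u < 1) :
    ‖∫ z in (0:ℝ)..u, Rhet z‖ ≤ 1 := by
  have : ‖∫ z in (0:ℝ)..u, Rhet z‖ ≤ 1 * |u - 0| := by
    apply intervalIntegral.norm_integral_le_of_norm_le_const
    intro x hx
    rw [Set.uIoc_of_le hu0] at hx
    exact Rhet_bound ⟨hx.1.le, le_trans hx.2 hu1.le⟩ (lt_of_le_of_lt hx.2 hu1)
  calc ‖∫ z in (0:ℝ)..u, Rhet z‖ ≤ 1 * |u - 0| := this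
    _ = |u| := by ring_nf
    _ ≤ 1 := by rw [abs_of_nonneg hu0]; exact hu1.le

lemma L_tendsto : Filter.Tendsto (fun u => -Real.log (1 - u)) (nhdsWithin 1 (Set.Iio 1)) atTop := by
  have h1 : Filter.Tendsto (fun u : ℝ => 1 - u) (nhdsWithin 1 (Set.Iio 1)) (nhdsWithin 0 (Set.Ioi 0)) := by
    apply tendsto_nhdsWithin_of_tendsto_nhds_of_eventually_within
    · have h0 : Filter.Tendsto (fun u : ℝ => 1 - u) (nhds 1) (nhds 0) := by
        simpa using ((continuous_id.tendsto (1:ℝ)).const_sub (1:ℝ))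
      exact h0.mono_left nhdsWithin_le_nhds
    · filter_upwards [self_mem_nhdsWithin] with u hu
      simp only [Set.mem_Iio] at hu
      simp [Set.mem_Ioi]; linarith
  have h2 := Real.tendsto_log_nhdsGT_zero.comp h1
  exact Filter.tendsto_neg_atBot_atTop.comp h2

lemma main_lim : Filter.Tendsto (fun u => Shet 0 u / (-Real.log (1 - u)))
    (nhdsWithin 1 (Set.Iio 1)) (nhds (1 / Real.exp 1)) := by
  set L : ℝ → ℝ := fun u => -Real.log (1 - u) with hLdef
  have hmem : ∀ᶠ u in nhdsWithin 1 (Set.Iio 1), u ∈ Set.Ioo (0:ℝ) 1 :=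
    Ioo_mem_nhdsLT_of_mem (by norm_num : (1:ℝ) ∈ Set.Ioc 0 1)
  have hLpos : ∀ᶠ u in nhdsWithin 1 (Set.Iio 1), 0 < L u :=
    L_tendsto.eventually_gt_atTop 0
  have hE0 : Filter.Tendsto (fun u => (∫ z in (0:ℝ)..u, Rhet z) / L u)
      (nhdsWithin 1 (Set.Iio 1)) (nhds 0) := by
    apply squeeze_zero_norm' ?_ L_tendsto.inv_tendsto_atTop
    filter_upwards [hmem, hLpos] with u hu hL
    rw [norm_div, Real.norm_eq_abs (L u), abs_of_pos hL]
    show _ ≤ (L u)⁻¹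
    rw [div_le_iff₀ hL, inv_mul_cancel₀ hL.ne']
    exact Rhet_int_bound hu.1.le hu.2
  have heq : ∀ᶠ u in nhdsWithin 1 (Set.Iio 1),
      Real.exp (-1) + (∫ z in (0:ℝ)..u, Rhet z) / L u = Shet 0 u / L u := by
    filter_upwards [hmem, hLpos] with u hu hL
    rw [Shet_decomp hu.1.le hu.2, add_div, mul_div_assoc, div_self hL.ne', mul_one]
  have hlim := (tendsto_const_nhds.add hE0).congr' heq
  rw [add_zero] at hlim
  have : (1:ℝ) / Real.exp 1 = Real.exp (-1) := by rw [Real.exp_neg, one_div]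
  rw [this]
  exact hlim

/-- Asymptotics of the heterodyne excitation probability near full excitation:
S(0,u)/(−log(1−u)) → 1/e as u → 1⁻, hence for fixed y ∈ (0,1) the excitation
probability P_{T_u<∞}(y) = S(0,y)/S(0,u) satisfies
−log(1−u)·P_{T_u<∞}(y) → e·S(0,y), and in particular P_{T_u<∞}(y) → 0. -/
theorem het_excitation_prob_asymptotics :
    Filter.Tendsto (fun u => Shet 0 u / (-Real.log (1 - u)))
      (nhdsWithin 1 (Set.Iio 1)) (nhds (1 / Real.exp 1)) ∧
    ∀ y ∈ Set.Ioo (0 : ℝ) 1,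
      Filter.Tendsto (fun u => -Real.log (1 - u) * (Shet 0 y / Shet 0 u))
        (nhdsWithin 1 (Set.Iio 1)) (nhds (Real.exp 1 * Shet 0 y)) ∧
      Filter.Tendsto (fun u => Shet 0 y / Shet 0 u)
        (nhdsWithin 1 (Set.Iio 1)) (nhds 0) := by
  refine ⟨main_lim, fun y hy => ?_⟩
  set L : ℝ → ℝ := fun u => -Real.log (1 - u) with hLdef
  have hB : Filter.Tendsto (fun u => L u / Shet 0 u)
      (nhdsWithin 1 (Set.Iio 1)) (nhds (Real.exp 1)) := by
    have := main_lim.inv₀ (by positivity : (1:ℝ) / Real.exp 1 ≠ 0)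
    have heq : (fun u => (Shet 0 u / L u)⁻¹) = fun u => L u / Shet 0 u := by
      funext u; rw [inv_div]
    rw [heq] at this
    simpa using this
  have h2 : Filter.Tendsto (fun u => L u * (Shet 0 y / Shet 0 u))
      (nhdsWithin 1 (Set.Iio 1)) (nhds (Real.exp 1 * Shet 0 y)) := by
    have := hB.const_mul (Shet 0 y)
    have heq : (fun u => Shet 0 y * (L u / Shet 0 u)) = fun u => L u * (Shet 0 y / Shet 0 u) := by
      funext u; ring
    rw [heq] at this
    convert this using 2
    ring
  refine ⟨h2, ?_⟩
  have hLpos : ∀ᶠ u in nhdsWithin 1 (Set.Iio 1), 0 < L u :=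
    L_tendsto.eventually_gt_atTop 0
  have h3 := L_tendsto.inv_tendsto_atTop.mul h2
  rw [zero_mul] at h3
  apply h3.congr'
  filter_upwards [hLpos] with u hL
  show (L u)⁻¹ * (L u * (Shet 0 y / Shet 0 u)) = _
  rw [inv_mul_cancel_left₀ hL.ne']
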